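/- Let Ω₀ ⊂ Ω ⊆ ℂ with Ω open and Ω₀ closed, let z₁,...,z_p ∈ Ω₀ and f analytic on Ω∖Ω₀. Define r₁ = inf_{w∈ℂ∖Ω} ∏_{k=1}^p |w − z_k|^{m_k} and r₂ = sup_{w∈Ω₀} ∏_{k=1}^p |w − z_k|^{m_k}, and suppose r₂ < r₁. Then for z ∈ Ω∖Ω₀ with r₂ < ∏_{k=1}^p |z − z_k|^{m_k} < r₁, the remainder of the N-term multi-point Laurent expansion tends to 0 as N → ∞: specifically, if Γ₁, Γ₂ are counterclockwise contours in Ω∖Ω₀ around z₁,...,z_p with ∏|z − z_k|^{m_k} < ∏|w − z_k|^{m_k} on Γ₁ and ∏|w − z_k|^{m_k} < ∏|z − z_k|^{m_k} on Γ₂, z inside Γ₁ but outside Γ₂, and |f| ≤ M on Γ₁ ∪ Γ₂, then the quantity r_N(z) = (1/2πi)∮_{Γ₁} f(w)∏(z−z_k)^{N m_k}/[(w−z)∏(w−z_k)^{N m_k}]dw − (1/2πi)∮_{Γ₂} f(w)∏(w−z_k)^{N m_k}/[(w−z)∏(z−z_k)^{N m_k}]dw tends to 0 as N → ∞. -/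

import Mathlib

open Finset Topology Filter

/-- the remainder of the `N`-term multi-point Laurent expansion tends to
`0` as `N → ∞`, for `z` in the lemniscate annulus `r₂ < ∏|z - z_k|^{m_k} < r₁`, with
contours `Γ₁ = C(c₁,R₁)` and `Γ₂ = C(c₂,R₂)` in `Ω ∖ Ω₀` around `Ω₀` satisfying the
stated product inequalities, `z` inside `Γ₁` and outside `Γ₂`, and `|f| ≤ M` on
`Γ₁ ∪ Γ₂`. -/
theorem multi_point_laurent_remainder_tendsto_zero
    (Ω Ω₀ : Set ℂ) (hΩ : IsOpen Ω) (hΩ₀ : IsClosed Ω₀) (hsub : Ω₀ ⊆ Ω)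
    (f : ℂ → ℂ) (hf : AnalyticOn ℂ f (Ω \ Ω₀))
    (p : ℕ) (zs : Fin p → ℂ) (hzs : Function.Injective zs)
    (hzsΩ₀ : ∀ k, zs k ∈ Ω₀) (ms : Fin p → ℕ) (hms : ∀ k, 1 ≤ ms k)
    (r₁ r₂ : ℝ)
    (hr₁ : r₁ = sInf ((fun w => ∏ k, ‖w - zs k‖ ^ ms k) '' Ωᶜ))
    (hr₂ : r₂ = sSup ((fun w => ∏ k, ‖w - zs k‖ ^ ms k) '' Ω₀))
    (hr : r₂ < r₁)
    (z : ℂ) (hzΩ : z ∈ Ω \ Ω₀)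
    (hz1 : r₂ < ∏ k, ‖z - zs k‖ ^ ms k)
    (hz2 : ∏ k, ‖z - zs k‖ ^ ms k < r₁)
    (c₁ c₂ : ℂ) (R₁ R₂ : ℝ) (hR₁ : 0 < R₁) (hR₂ : 0 < R₂)
    (hΓ₁ : Metric.sphere c₁ R₁ ⊆ Ω \ Ω₀) (hΓ₂ : Metric.sphere c₂ R₂ ⊆ Ω \ Ω₀)
    (hΩ₀in : Ω₀ ⊆ Metric.ball c₂ R₂)
    (hΓ₂Γ₁ : Metric.closedBall c₂ R₂ ⊆ Metric.ball c₁ R₁)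
    (hzin : z ∈ Metric.ball c₁ R₁) (hzout : z ∉ Metric.closedBall c₂ R₂)
    (hw1 : ∀ w ∈ Metric.sphere c₁ R₁,
      ∏ k, ‖z - zs k‖ ^ ms k < ∏ k, ‖w - zs k‖ ^ ms k)
    (hw2 : ∀ w ∈ Metric.sphere c₂ R₂,
      ∏ k, ‖w - zs k‖ ^ ms k < ∏ k, ‖z - zs k‖ ^ ms k)
    (M : ℝ) (hM : ∀ w ∈ Metric.sphere c₁ R₁ ∪ Metric.sphere c₂ R₂,
      ‖f w‖ ≤ M) :
    Filter.Tendsto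
      (fun N : ℕ =>
        (2 * (Real.pi : ℂ) * Complex.I)⁻¹ *
          (∮ w in C(c₁, R₁), f w * (∏ k, (z - zs k) ^ (N * ms k)) /
            ((w - z) * ∏ k, (w - zs k) ^ (N * ms k))) -
        (2 * (Real.pi : ℂ) * Complex.I)⁻¹ *
          (∮ w in C(c₂, R₂), f w * (∏ k, (w - zs k) ^ (N * ms k)) /
            ((w - z) * ∏ k, (z - zs k) ^ (N * ms k))))
      Filter.atTop (𝓝 0) := by
  classical
  -- notation
  set g : ℂ → ℝ := fun w => ∏ k, ‖w - zs k‖ ^ ms k with hg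
  have hPpos : 0 < g z := by
    apply Finset.prod_pos
    intro k _
    apply pow_pos
    apply norm_pos_iff.2
    rw [sub_ne_zero]
    intro h
    exact hzΩ.2 (h ▸ hzsΩ₀ k)
  have hgc : Continuous g := by
    apply continuous_finset_prod
    intro k _
    exact (continuous_norm.comp (continuous_id.sub continuous_const)).pow _
  -- max of P / g on Γ₁
  obtain ⟨w₁, hw₁S, hmax₁⟩ := (isCompact_sphere c₁ R₁).exists_isMaxOn
    (NormedSpace.sphere_nonempty.2 hR₁.le)
    ((continuousOn_const (c := g z)).div hgc.continuousOn
      (fun w hw => (hPpos.trans (hw1 w hw)).ne'))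
  obtain ⟨w₂, hw₂S, hmax₂⟩ := (isCompact_sphere c₂ R₂).exists_isMaxOn
    (NormedSpace.sphere_nonempty.2 hR₂.le)
    ((hgc.continuousOn).div (continuousOn_const (c := g z)) (fun _ _ => hPpos.ne'))
  set q₁ : ℝ := g z / g w₁ with hq₁def
  set q₂ : ℝ := g w₂ / g z with hq₂def
  have hgw₁ : g z < g w₁ := hw1 w₁ hw₁S
  have hgw₂ : g w₂ < g z := hw2 w₂ hw₂S
  have hq₁lt : q₁ < 1 := (div_lt_one (hPpos.trans hgw₁)).2 hgw₁
  have hq₂lt : q₂ < 1 := (div_lt_one hPpos).2 hgw₂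
  have hq₁0 : 0 ≤ q₁ := div_nonneg hPpos.le (hPpos.trans hgw₁).le
  have hq₂0 : 0 ≤ q₂ := by
    apply div_nonneg _ hPpos.le
    exact Finset.prod_nonneg fun k _ => pow_nonneg (norm_nonneg _) _
  -- distances
  set d₁ : ℝ := R₁ - dist z c₁ with hd₁def
  set d₂ : ℝ := dist z c₂ - R₂ with hd₂def
  have hd₁pos : 0 < d₁ := sub_pos.2 (Metric.mem_ball.1 hzin)
  have hd₂pos : 0 < d₂ := sub_pos.2 (lt_of_not_ge fun h => hzout (Metric.mem_closedBall.2 h))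
  have hM0 : 0 ≤ M :=
    le_trans (norm_nonneg _) (hM w₁ (Or.inl hw₁S))
  -- norm of (2πi)⁻¹
  have hnorm2pi : ‖(2 * (Real.pi : ℂ) * Complex.I)⁻¹‖ = (2 * Real.pi)⁻¹ := by
    simp [norm_inv, Complex.norm_real, abs_of_nonneg Real.pi_nonneg]
  -- product norm computations
  have habs : ∀ (v : ℂ) (N : ℕ),
      ‖∏ k, (v - zs k) ^ (N * ms k)‖ = g v ^ N := by
    intro v N
    rw [norm_prod, ← Finset.prod_pow]
    apply Finset.prod_congr rfl
    intro k _
    rw [norm_pow, mul_comm, pow_mul]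
  -- pointwise bounds on the integrands
  have bound₁ : ∀ (N : ℕ) (w : ℂ), w ∈ Metric.sphere c₁ R₁ →
      ‖f w * (∏ k, (z - zs k) ^ (N * ms k)) /
        ((w - z) * ∏ k, (w - zs k) ^ (N * ms k))‖ ≤ M / d₁ * q₁ ^ N := by
    intro N w hw
    have hgw : g z < g w := hw1 w hw
    have hgwpos : 0 < g w := hPpos.trans hgw
    have hdist : d₁ ≤ ‖w - z‖ := by
      have h := dist_triangle w z c₁
      rw [Metric.mem_sphere.1 hw] at *
      have : ‖w - z‖ = dist w z := (dist_eq_norm w z).symm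
      rw [this]
      linarith [dist_triangle w z c₁, Metric.mem_sphere.1 hw]
    simp only [norm_div, norm_mul, habs]
    have heq : ‖f w‖ * g z ^ N / (‖w - z‖ * g w ^ N)
        = (‖f w‖ / ‖w - z‖) * (g z / g w) ^ N := by
      rw [div_pow, div_mul_div_comm]
    rw [heq]
    apply mul_le_mul
    · exact div_le_div₀ hM0 (hM w (Or.inl hw)) hd₁pos hdist
    · exact pow_le_pow_left₀ (div_nonneg hPpos.le hgwpos.le) (hmax₁ hw) N
    · exact pow_nonneg (div_nonneg hPpos.le hgwpos.le) N
    · exact div_nonneg hM0 hd₁pos.le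
  have bound₂ : ∀ (N : ℕ) (w : ℂ), w ∈ Metric.sphere c₂ R₂ →
      ‖f w * (∏ k, (w - zs k) ^ (N * ms k)) /
        ((w - z) * ∏ k, (z - zs k) ^ (N * ms k))‖ ≤ M / d₂ * q₂ ^ N := by
    intro N w hw
    have hgw : g w < g z := hw2 w hw
    have hgwnn : 0 ≤ g w :=
      Finset.prod_nonneg fun k _ => pow_nonneg (norm_nonneg _) _
    have hdist : d₂ ≤ ‖w - z‖ := by
      have : ‖w - z‖ = dist z w := by
        rw [dist_eq_norm, norm_sub_rev]
      rw [this]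
      have h := dist_triangle z w c₂
      have hw' : dist w c₂ = R₂ := Metric.mem_sphere.1 hw
      linarith
    simp only [norm_div, norm_mul, habs]
    have heq : ‖f w‖ * g w ^ N / (‖w - z‖ * g z ^ N)
        = (‖f w‖ / ‖w - z‖) * (g w / g z) ^ N := by
      rw [div_pow, div_mul_div_comm]
    rw [heq]
    apply mul_le_mul
    · exact div_le_div₀ hM0 (hM w (Or.inr hw)) hd₂pos hdist
    · exact pow_le_pow_left₀ (div_nonneg hgwnn hPpos.le) (hmax₂ hw) N
    · exact pow_nonneg (div_nonneg hgwnn hPpos.le) N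
    · exact div_nonneg hM0 hd₂pos.le
  -- squeeze
  apply squeeze_zero_norm
    (a := fun N : ℕ => (2 * Real.pi)⁻¹ * (2 * Real.pi * R₁ * (M / d₁ * q₁ ^ N))
      + (2 * Real.pi)⁻¹ * (2 * Real.pi * R₂ * (M / d₂ * q₂ ^ N)))
  · intro N
    refine le_trans (norm_sub_le _ _) (add_le_add ?_ ?_)
    · rw [norm_mul, hnorm2pi]
      exact mul_le_mul_of_nonneg_left
        (circleIntegral.norm_integral_le_of_norm_le_const hR₁.le (bound₁ N))
        (inv_nonneg.2 (by positivity))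
    · rw [norm_mul, hnorm2pi]
      exact mul_le_mul_of_nonneg_left
        (circleIntegral.norm_integral_le_of_norm_le_const hR₂.le (bound₂ N))
        (inv_nonneg.2 (by positivity))
  · have h₁ := (tendsto_pow_atTop_nhds_zero_of_lt_one hq₁0 hq₁lt).const_mul
      ((2 * Real.pi)⁻¹ * (2 * Real.pi * R₁ * (M / d₁)))
    have h₂ := (tendsto_pow_atTop_nhds_zero_of_lt_one hq₂0 hq₂lt).const_mul
      ((2 * Real.pi)⁻¹ * (2 * Real.pi * R₂ * (M / d₂)))
    have := h₁.add h₂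
    simp only [mul_zero, add_zero] at this
    convert this using 2 with N
    ring
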